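/- Let γ_A ≥ 1 and γ₀ be integers. For every a, b ∈ ℚ_p with a ≠ 0 there exist unique γ ∈ ℤ, a natural number J with 1 ≤ J < p^{γ_A} and p ∤ J, and n ∈ R_{1−γ₀}, such that, setting a₁ = p^γ·J ∈ ℚ_p, one has |a·a₁^{-1} − 1|_p ≤ p^{-γ_A} and |(b − a₁ n)·a₁^{-1}|_p ≤ p^{γ₀−1}. (Equivalently: every element G(a,b) of the p-adic affine group factors uniquely as G(p^γ J, p^γ J n)·G(a₀, b₀) with |a₀ − 1|_p ≤ p^{-γ_A} and |b₀|_p ≤ p^{γ₀−1}.) -/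

import Mathlib

open MeasureTheory

/-- Action of the `p`-adic affine group on complex-valued functions:
`(G(a,b)f)(x) = |a|_p^{-1/2} f((x-b)/a)`. -/
noncomputable def Gact (p : ℕ) [Fact p.Prime] (a b : ℚ_[p]) (f : ℚ_[p] → ℂ) : ℚ_[p] → ℂ :=
  fun x => ((‖a‖ ^ (-(1/2) : ℝ) : ℝ) : ℂ) * f ((x - b) / a)

/-- `Ω(|x|_p)`: the indicator function of the unit ball `ℤ_p`. -/
noncomputable def Omega (p : ℕ) [Fact p.Prime] : ℚ_[p] → ℂ :=
  fun x => if ‖x‖ ≤ 1 then 1 else 0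

/-- `R_σ`: the set of finite sums `∑_{l=-δ}^{σ-1} n_l p^l` with digits `n_l ∈ {0,…,p-1}`,
a complete set of representatives of `ℚ_p / p^σ ℤ_p`. -/
def Rset (p : ℕ) [Fact p.Prime] (σ : ℤ) : Set ℚ_[p] :=
  { x | ∃ (δ : ℕ) (d : ℤ → ℕ), (∀ l, d l < p) ∧
      x = ∑ l ∈ Finset.Icc (-(δ : ℤ)) (σ - 1), (d l : ℚ_[p]) * (p : ℚ_[p]) ^ l }

section Aux

lemma digits_sum (p : ℕ) (hp : 0 < p) : ∀ N, ∀ m, m < p ^ N →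
    ∃ d : ℕ → ℕ, (∀ k, d k < p) ∧ m = ∑ k ∈ Finset.range N, d k * p ^ k := by
  intro N
  induction N with
  | zero =>
    intro m hm
    exact ⟨fun _ => 0, fun _ => hp, by simpa using Nat.lt_one_iff.mp hm⟩
  | succ N ih =>
    intro m hm
    obtain ⟨d, hd, hsum⟩ := ih (m / p)
      (Nat.div_lt_of_lt_mul (by rw [pow_succ, mul_comm] at hm; exact hm))
    refine ⟨fun k => if k = 0 then m % p else d (k - 1), fun k => ?_, ?_⟩
    · dsimp only; split
      · exact Nat.mod_lt _ hp
      · exact hd _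
    · rw [Finset.sum_range_succ']
      have : ∀ k ∈ Finset.range N, (if k + 1 = 0 then m % p else d (k + 1 - 1)) * p ^ (k + 1)
          = (d k * p ^ k) * p := by
        intro k _; simp [pow_succ]; ring
      rw [Finset.sum_congr rfl this, ← Finset.sum_mul, ← hsum]
      simp only [if_pos rfl, pow_zero, mul_one, if_true]
      have := Nat.div_add_mod' m p
      omega

lemma sum_digits_lt (p : ℕ) (hp : 0 < p) (d : ℕ → ℕ) (hd : ∀ k, d k < p) :
    ∀ N, ∑ k ∈ Finset.range N, d k * p ^ k < p ^ N := by
  intro N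
  induction N with
  | zero => simp
  | succ N ih =>
    rw [Finset.sum_range_succ, pow_succ]
    have h1 : d N * p ^ N ≤ (p - 1) * p ^ N := Nat.mul_le_mul_right _ (by have := hd N; omega)
    have h2 : 0 < p ^ N := Nat.pow_pos hp
    nlinarith [hd N]

lemma Icc_eq_map (δ : ℕ) (σ : ℤ) :
    Finset.Icc (-(δ:ℤ)) (σ-1) = (Finset.range ((δ:ℤ)+σ).toNat).map
      ⟨fun (k : ℕ) => (k:ℤ) - δ, (sub_left_injective (b := (δ:ℤ))).comp Nat.cast_injective⟩ := by
  ext l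
  simp only [Finset.mem_Icc, Finset.mem_map, Finset.mem_range, Function.Embedding.coeFn_mk]
  constructor
  · rintro ⟨h1, h2⟩
    exact ⟨(l+δ).toNat, by omega, by omega⟩
  · rintro ⟨k, hk, rfl⟩
    omega

lemma key_sum (p : ℕ) [hp : Fact p.Prime] (σ : ℤ) (δ : ℕ) (D : ℤ → ℕ) :
    ∑ l ∈ Finset.Icc (-(δ:ℤ)) (σ-1), (D l : ℚ_[p]) * (p : ℚ_[p]) ^ l
      = ((∑ k ∈ Finset.range ((δ:ℤ)+σ).toNat, D ((k:ℤ) - δ) * p ^ k : ℕ) : ℚ_[p])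
        / (p : ℚ_[p]) ^ (δ:ℕ) := by
  have hp0 : (p : ℚ_[p]) ≠ 0 := Nat.cast_ne_zero.mpr hp.out.ne_zero
  rw [Icc_eq_map δ σ, Finset.sum_map]
  push_cast
  rw [Finset.sum_div]
  refine Finset.sum_congr rfl fun k _ => ?_
  simp only [Function.Embedding.coeFn_mk]
  rw [zpow_sub₀ hp0, zpow_natCast, zpow_natCast]
  ring

lemma mem_Rset (p : ℕ) [hp : Fact p.Prime] (σ : ℤ) (δ m : ℕ)
    (hm : m < p ^ ((δ:ℤ) + σ).toNat) :
    ((m : ℚ_[p]) / (p : ℚ_[p]) ^ (δ:ℕ)) ∈ Rset p σ := by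
  obtain ⟨d, hd, hsum⟩ := digits_sum p hp.out.pos _ m hm
  refine ⟨δ, fun l => d (l + δ).toNat, fun l => hd _, ?_⟩
  rw [key_sum]
  congr 2
  rw [hsum]
  refine Finset.sum_congr rfl fun k _ => ?_
  congr 2
  omega

lemma Rset_shape (p : ℕ) [hp : Fact p.Prime] (σ : ℤ) (x : ℚ_[p]) (hx : x ∈ Rset p σ) :
    ∃ δ m : ℕ, m < p ^ ((δ:ℤ) + σ).toNat ∧ x = (m : ℚ_[p]) / (p : ℚ_[p]) ^ (δ:ℕ) := by
  obtain ⟨δ, d, hd, rfl⟩ := hx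
  exact ⟨δ, _, sum_digits_lt p hp.out.pos (fun k => d ((k:ℤ) - δ)) (fun k => hd _) _,
    key_sum p σ δ d⟩

lemma exists_rep (p : ℕ) [hp : Fact p.Prime] (σ : ℤ) (x : ℚ_[p]) :
    ∃ n ∈ Rset p σ, ‖x - n‖ ≤ (p : ℝ) ^ (-σ) := by
  have hp1 : (1:ℝ) < (p:ℝ) := by exact_mod_cast hp.out.one_lt
  have hp0 : (p : ℚ_[p]) ≠ 0 := Nat.cast_ne_zero.mpr hp.out.ne_zero
  rcases eq_or_ne x 0 with rfl | hx
  · refine ⟨0, ?_, by simp [zpow_nonneg (by positivity : (0:ℝ) ≤ (p:ℝ))]⟩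
    have := mem_Rset p σ 0 0 (pow_pos hp.out.pos _)
    simpa using this
  · set δ : ℕ := (-x.valuation).toNat with hδdef
    have hδ : -x.valuation ≤ (δ:ℤ) := Int.self_le_toNat _
    have hz : ‖x * (p:ℚ_[p]) ^ (δ:ℕ)‖ ≤ 1 := by
      rw [norm_mul, Padic.norm_eq_zpow_neg_valuation hx, Padic.norm_p_pow, ← zpow_add₀ (by positivity : (p:ℝ) ≠ 0)]
      exact zpow_le_one_of_nonpos₀ hp1.le (by omega)
    set z : ℤ_[p] := ⟨x * (p:ℚ_[p]) ^ (δ:ℕ), hz⟩ with hzdef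
    set N : ℕ := ((δ:ℤ) + σ).toNat with hNdef
    set m : ℕ := z.appr N with hmdef
    refine ⟨(m : ℚ_[p]) / (p : ℚ_[p]) ^ (δ:ℕ), mem_Rset p σ δ m (z.appr_lt N), ?_⟩
    have hspec : ‖z - (m : ℤ_[p])‖ ≤ (p:ℝ) ^ (-(N:ℤ)) :=
      (PadicInt.norm_le_pow_iff_mem_span_pow _ N).mpr (PadicInt.appr_spec N z)
    have hcoe : ((z - (m : ℤ_[p]) : ℤ_[p]) : ℚ_[p]) = x * (p:ℚ_[p]) ^ (δ:ℕ) - m := by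
      push_cast [hzdef]; rfl
    have hxn : x - (m : ℚ_[p]) / (p : ℚ_[p]) ^ (δ:ℕ)
        = (x * (p:ℚ_[p]) ^ (δ:ℕ) - m) / (p : ℚ_[p]) ^ (δ:ℕ) := by
      field_simp
    rw [hxn, norm_div, Padic.norm_p_pow]
    rw [PadicInt.norm_def, hcoe] at hspec
    calc ‖x * (p:ℚ_[p]) ^ (δ:ℕ) - m‖ / (p:ℝ) ^ (-(δ:ℤ))
        ≤ (p:ℝ) ^ (-(N:ℤ)) / (p:ℝ) ^ (-(δ:ℤ)) := by
          gcongr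
      _ = (p:ℝ) ^ (-(N:ℤ) + (δ:ℤ)) := by
          rw [← zpow_sub₀ (by positivity : (p:ℝ) ≠ 0)]; ring_nf
      _ ≤ (p:ℝ) ^ (-σ) := by
          apply zpow_le_zpow_right₀ hp1.le
          omega

lemma rep_unique (p : ℕ) [hp : Fact p.Prime] (σ : ℤ) {n₁ n₂ : ℚ_[p]}
    (h₁ : n₁ ∈ Rset p σ) (h₂ : n₂ ∈ Rset p σ) (h : ‖n₁ - n₂‖ ≤ (p : ℝ) ^ (-σ)) :
    n₁ = n₂ := by
  have hp1 : (1:ℝ) < (p:ℝ) := by exact_mod_cast hp.out.one_lt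
  have hp0 : (p : ℚ_[p]) ≠ 0 := Nat.cast_ne_zero.mpr hp.out.ne_zero
  obtain ⟨δ₁, m₁, hm₁, rfl⟩ := Rset_shape p σ n₁ h₁
  obtain ⟨δ₂, m₂, hm₂, rfl⟩ := Rset_shape p σ n₂ h₂
  set z : ℤ := (m₁ : ℤ) * p ^ δ₂ - (m₂ : ℤ) * p ^ δ₁ with hzdef
  set M : ℕ := (σ + δ₁ + δ₂).toNat with hMdef
  -- norm bound on z
  have hdiff : ((z : ℚ_[p])) = ((m₁ : ℚ_[p]) / (p:ℚ_[p]) ^ (δ₁:ℕ) - (m₂ : ℚ_[p]) / (p:ℚ_[p]) ^ (δ₂:ℕ))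
      * (p : ℚ_[p]) ^ (δ₁ + δ₂ : ℕ) := by
    rw [hzdef]; field_simp
    push_cast
    ring
  have hznorm : ‖(z : ℚ_[p])‖ ≤ (p:ℝ) ^ (-(M:ℤ)) := by
    rcases le_or_gt 0 (σ + δ₁ + δ₂) with hM0 | hM0
    · have : (M:ℤ) = σ + δ₁ + δ₂ := by omega
      rw [hdiff, norm_mul, Padic.norm_p_pow, this]
      calc ‖_‖ * (p:ℝ) ^ (-(δ₁ + δ₂ : ℕ) : ℤ) ≤ (p:ℝ) ^ (-σ) * (p:ℝ) ^ (-(δ₁ + δ₂ : ℕ) : ℤ) := by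
            gcongr
        _ = (p:ℝ) ^ (-(σ + δ₁ + δ₂)) := by
            rw [← zpow_add₀ (by positivity : (p:ℝ) ≠ 0)]
            congr 1
            push_cast
            ring
    · have : (M:ℤ) = 0 := by omega
      rw [this]
      simpa using Padic.norm_int_le_one z
  have hdvd : ((p:ℤ) ^ M) ∣ z := (Padic.norm_int_le_pow_iff_dvd z M).mp hznorm
  have habs : |z| < (p:ℤ) ^ M := by
    have hb₁ : (m₁ : ℤ) * p ^ δ₂ < (p:ℤ) ^ M := by
      rcases le_or_gt 0 ((δ₁:ℤ) + σ) with hc | hc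
      · have h1 : ((δ₁:ℤ) + σ).toNat + δ₂ = M := by omega
        calc (m₁ : ℤ) * p ^ δ₂ < (p:ℤ) ^ (((δ₁:ℤ) + σ).toNat) * p ^ δ₂ := by
              have : (m₁ : ℤ) < (p:ℤ) ^ (((δ₁:ℤ) + σ).toNat) := by exact_mod_cast hm₁
              have hpos : (0:ℤ) < (p:ℤ) ^ δ₂ := pow_pos (by exact_mod_cast hp.out.pos) _
              exact mul_lt_mul_of_pos_right this hpos
          _ = (p:ℤ) ^ M := by rw [← pow_add, h1]
      · have h0 : ((δ₁:ℤ) + σ).toNat = 0 := by omega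
        rw [h0, pow_zero] at hm₁
        have : m₁ = 0 := by omega
        simp only [this, Int.natCast_zero, zero_mul]
        exact pow_pos (by exact_mod_cast hp.out.pos) _
    have hb₂ : (m₂ : ℤ) * p ^ δ₁ < (p:ℤ) ^ M := by
      rcases le_or_gt 0 ((δ₂:ℤ) + σ) with hc | hc
      · have h1 : ((δ₂:ℤ) + σ).toNat + δ₁ = M := by omega
        calc (m₂ : ℤ) * p ^ δ₁ < (p:ℤ) ^ (((δ₂:ℤ) + σ).toNat) * p ^ δ₁ := by
              have : (m₂ : ℤ) < (p:ℤ) ^ (((δ₂:ℤ) + σ).toNat) := by exact_mod_cast hm₂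
              have hpos : (0:ℤ) < (p:ℤ) ^ δ₁ := pow_pos (by exact_mod_cast hp.out.pos) _
              exact mul_lt_mul_of_pos_right this hpos
          _ = (p:ℤ) ^ M := by rw [← pow_add, h1]
      · have h0 : ((δ₂:ℤ) + σ).toNat = 0 := by omega
        rw [h0, pow_zero] at hm₂
        have : m₂ = 0 := by omega
        simp only [this, Int.natCast_zero, zero_mul]
        exact pow_pos (by exact_mod_cast hp.out.pos) _
    have hnn₁ : (0:ℤ) ≤ (m₁ : ℤ) * p ^ δ₂ := by positivity
    have hnn₂ : (0:ℤ) ≤ (m₂ : ℤ) * p ^ δ₁ := by positivity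
    rw [abs_lt]
    omega
  have hz0 : z = 0 := Int.eq_zero_of_abs_lt_dvd hdvd habs
  have : (m₁ : ℤ) * p ^ δ₂ = (m₂ : ℤ) * p ^ δ₁ := by omega
  have hcast : (m₁ : ℚ_[p]) * (p:ℚ_[p]) ^ (δ₂:ℕ) = (m₂ : ℚ_[p]) * (p:ℚ_[p]) ^ (δ₁:ℕ) := by
    exact_mod_cast congrArg (fun t : ℤ => (t : ℚ_[p])) this
  rw [div_eq_div_iff (pow_ne_zero _ hp0) (pow_ne_zero _ hp0)]
  exact hcast

end Aux

theorem stmt_9 (p : ℕ) [Fact p.Prime] (γA γ₀ : ℤ) (hγA : 1 ≤ γA)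
    (a b : ℚ_[p]) (ha : a ≠ 0) :
    ∃! q : ℤ × ℕ × ℚ_[p],
      (1 ≤ q.2.1 ∧ (q.2.1 : ℚ) < (p : ℚ) ^ γA ∧ ¬ (p ∣ q.2.1) ∧ q.2.2 ∈ Rset p (1 - γ₀)) ∧
      ‖a * ((p : ℚ_[p]) ^ q.1 * (q.2.1 : ℚ_[p]))⁻¹ - 1‖ ≤ (p : ℝ) ^ (-γA) ∧
      ‖(b - (p : ℚ_[p]) ^ q.1 * (q.2.1 : ℚ_[p]) * q.2.2) *
          ((p : ℚ_[p]) ^ q.1 * (q.2.1 : ℚ_[p]))⁻¹‖ ≤ (p : ℝ) ^ (γ₀ - 1) := by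
  have hp := (Fact.out : p.Prime)
  have hp1 : (1:ℝ) < (p:ℝ) := by exact_mod_cast hp.one_lt
  have hp0 : (p : ℚ_[p]) ≠ 0 := Nat.cast_ne_zero.mpr hp.ne_zero
  have hnat : ∀ k : ℕ, ‖(k : ℚ_[p])‖ ≤ 1 := fun k => by
    have := Padic.norm_int_le_one (p := p) (k : ℤ)
    rwa [Int.cast_natCast] at this
  set g : ℕ := γA.toNat with hgdef
  have hg : (g : ℤ) = γA := Int.toNat_of_nonneg (by omega)
  have hg1 : 1 ≤ g := by omega
  -- the unit part
  set γ : ℤ := a.valuation with hγdef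
  set u : ℚ_[p] := a * (p : ℚ_[p]) ^ (-γ) with hudef
  have hu : ‖u‖ = 1 := by
    rw [hudef, norm_mul, Padic.norm_p_zpow, Padic.norm_eq_zpow_neg_valuation ha,
      ← zpow_add₀ (by positivity : (p:ℝ) ≠ 0)]
    simp [hγdef]
  have hau : a = (p : ℚ_[p]) ^ γ * u := by
    rw [hudef, ← mul_assoc, mul_comm ((p:ℚ_[p])^γ) a, mul_assoc,
      ← zpow_add₀ hp0]
    simp
  set U : ℤ_[p] := ⟨u, hu.le⟩ with hUdef
  set J : ℕ := U.appr g with hJdef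
  have hJlt : J < p ^ g := U.appr_lt g
  have hspecU : ‖U - (J : ℤ_[p])‖ ≤ (p:ℝ) ^ (-(g:ℤ)) :=
    (PadicInt.norm_le_pow_iff_mem_span_pow _ g).mpr (PadicInt.appr_spec g U)
  have hspec : ‖u - (J : ℚ_[p])‖ ≤ (p:ℝ) ^ (-(g:ℤ)) := by
    have : ((U - (J:ℤ_[p]) : ℤ_[p]) : ℚ_[p]) = u - (J : ℚ_[p]) := by push_cast [hUdef]; rfl
    rwa [PadicInt.norm_def, this] at hspecU
  have hgpow : (p:ℝ) ^ (-(g:ℤ)) ≤ (p:ℝ) ^ (-(1:ℤ)) :=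
    zpow_le_zpow_right₀ hp1.le (by omega)
  have hplt1 : (p:ℝ) ^ (-(1:ℤ)) < 1 := by
    rw [zpow_neg_one]
    exact inv_lt_one_of_one_lt₀ hp1
  -- p does not divide J
  have hpJ : ¬ p ∣ J := by
    intro ⟨k, hk⟩
    have h1 : ‖(J : ℚ_[p])‖ ≤ (p:ℝ) ^ (-(1:ℤ)) := by
      rw [hk]
      push_cast
      rw [norm_mul, Padic.norm_p, zpow_neg_one]
      calc (p:ℝ)⁻¹ * ‖(k : ℚ_[p])‖ ≤ (p:ℝ)⁻¹ * 1 := by gcongr; exact hnat k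
        _ = (p:ℝ)⁻¹ := mul_one _
    have h2 : ‖u‖ ≤ (p:ℝ) ^ (-(1:ℤ)) := by
      have h3 : u = (u - (J:ℚ_[p])) + (J:ℚ_[p]) := by ring
      rw [h3]
      exact le_trans (Padic.nonarchimedean _ _) (max_le (hspec.trans hgpow) h1)
    rw [hu] at h2
    exact absurd (h2.trans_lt hplt1) (lt_irrefl 1)
  have hJ0 : J ≠ 0 := fun h0 => hpJ (h0 ▸ dvd_zero p)
  have hJQ0 : (J : ℚ_[p]) ≠ 0 := Nat.cast_ne_zero.mpr hJ0
  have hnorm_one : ∀ K : ℕ, ¬ p ∣ K → ‖(K : ℚ_[p])‖ = 1 := by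
    intro K hK
    rcases lt_or_eq_of_le (hnat K) with h | h
    · exfalso
      have h' : ‖((K : ℤ) : ℚ_[p])‖ < 1 := by rwa [Int.cast_natCast]
      have := (Padic.norm_intCast_lt_one_iff (p := p) (k := (K : ℤ))).mp h'
      exact hK (by exact_mod_cast this)
    · exact h
  have hJnorm : ‖(J : ℚ_[p])‖ = 1 := hnorm_one J hpJ
  -- choose n
  set a₁ : ℚ_[p] := (p : ℚ_[p]) ^ γ * (J : ℚ_[p]) with ha₁def
  have ha₁0 : a₁ ≠ 0 := mul_ne_zero (zpow_ne_zero _ hp0) hJQ0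
  obtain ⟨n, hnR, hn⟩ := exists_rep p (1 - γ₀) (b * a₁⁻¹)
  have hexp : (p:ℝ) ^ (-(1 - γ₀)) = (p:ℝ) ^ (γ₀ - 1) := by ring_nf
  have hpg : (p:ℚ_[p]) ^ γ ≠ 0 := zpow_ne_zero _ hp0
  -- the first estimate for a candidate (γ, J'):
  have key : ∀ J' : ℕ, (J' : ℚ_[p]) ≠ 0 →
      a * ((p : ℚ_[p]) ^ γ * (J' : ℚ_[p]))⁻¹ - 1 = (u - (J' : ℚ_[p])) * (J' : ℚ_[p])⁻¹ := by
    intro J' hJ'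
    rw [hau, mul_inv,
      show (p:ℚ_[p])^γ * u * (((p:ℚ_[p])^γ)⁻¹ * ((J':ℚ_[p]))⁻¹)
        = (u * ((J':ℚ_[p]))⁻¹) * ((p:ℚ_[p])^γ * ((p:ℚ_[p])^γ)⁻¹) by ring,
      mul_inv_cancel₀ hpg, mul_one, sub_mul, mul_inv_cancel₀ hJ']
  have hJQlt : (J : ℚ) < (p : ℚ) ^ γA := by
    have h1 : (J : ℚ) < ((p ^ g : ℕ) : ℚ) := by exact_mod_cast hJlt
    rwa [Nat.cast_pow, ← zpow_natCast, hg] at h1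
  refine ⟨⟨γ, J, n⟩, ⟨⟨Nat.one_le_iff_ne_zero.mpr hJ0, hJQlt, hpJ, hnR⟩, ?_, ?_⟩, ?_⟩
  · -- first inequality
    show ‖a * ((p : ℚ_[p]) ^ γ * (J : ℚ_[p]))⁻¹ - 1‖ ≤ (p : ℝ) ^ (-γA)
    rw [key J hJQ0, norm_mul, norm_inv, hJnorm, inv_one, mul_one, ← hg]
    exact hspec
  · -- second inequality
    show ‖(b - (p : ℚ_[p]) ^ γ * (J : ℚ_[p]) * n) * ((p : ℚ_[p]) ^ γ * (J : ℚ_[p]))⁻¹‖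
      ≤ (p : ℝ) ^ (γ₀ - 1)
    have heq : (b - (p : ℚ_[p]) ^ γ * (J : ℚ_[p]) * n) * ((p : ℚ_[p]) ^ γ * (J : ℚ_[p]))⁻¹
        = b * a₁⁻¹ - n := by
      rw [← ha₁def, sub_mul, mul_comm a₁ n, mul_assoc, mul_inv_cancel₀ ha₁0, mul_one]
    rw [heq]
    exact hn.trans_eq hexp
  · -- uniqueness
    rintro ⟨γ', J', n'⟩ ⟨⟨hJ'1, hJ'lt, hpJ', hn'R⟩, h1', h2'⟩
    simp only at hJ'1 hJ'lt hpJ' hn'R h1' h2'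
    have hJ'Q0 : (J' : ℚ_[p]) ≠ 0 := Nat.cast_ne_zero.mpr (by omega)
    have hJ'norm : ‖(J' : ℚ_[p])‖ = 1 := hnorm_one J' hpJ'
    have ha₁'0 : (p : ℚ_[p]) ^ γ' * (J' : ℚ_[p]) ≠ 0 :=
      mul_ne_zero (zpow_ne_zero _ hp0) hJ'Q0
    -- step 1 : γ' = γ
    have hgpow' : (p:ℝ) ^ (-γA) ≤ (p:ℝ) ^ (-(1:ℤ)) := by rw [← hg]; exact hgpow
    have hwlt : ‖a * ((p : ℚ_[p]) ^ γ' * (J' : ℚ_[p]))⁻¹ - 1‖ < 1 :=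
      lt_of_le_of_lt (h1'.trans hgpow') hplt1
    have hwnorm : ‖a * ((p : ℚ_[p]) ^ γ' * (J' : ℚ_[p]))⁻¹‖ = 1 := by
      set w := a * ((p : ℚ_[p]) ^ γ' * (J' : ℚ_[p]))⁻¹ with hw
      have hne : ‖w - 1‖ ≠ ‖(1 : ℚ_[p])‖ := by rw [norm_one]; exact hwlt.ne
      have hmax : ‖(w - 1) + 1‖ = max ‖w - 1‖ ‖(1:ℚ_[p])‖ := Padic.add_eq_max_of_ne hne
      rw [sub_add_cancel] at hmax
      rw [hmax, norm_one, max_eq_right hwlt.le]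
    have hγ' : γ' = γ := by
      rw [norm_mul, norm_inv, norm_mul, Padic.norm_p_zpow, hJ'norm, mul_one,
        Padic.norm_eq_zpow_neg_valuation ha] at hwnorm
      field_simp at hwnorm
      have := zpow_right_injective₀ (by positivity) hp1.ne' hwnorm
      omega
    subst hγ'
    -- step 2 : J' = J
    have hspec' : ‖u - (J' : ℚ_[p])‖ ≤ (p:ℝ) ^ (-(g:ℤ)) := by
      rw [key J' hJ'Q0, norm_mul, norm_inv, hJ'norm, inv_one, mul_one, ← hg] at h1'
      exact h1'
    have hJJ' : ‖((((J:ℤ) - (J':ℤ)) : ℤ) : ℚ_[p])‖ ≤ (p:ℝ) ^ (-(g:ℤ)) := by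
      have hcast : ((((J:ℤ) - (J':ℤ)) : ℤ) : ℚ_[p]) = ((J:ℚ_[p]) - u) + (u - (J':ℚ_[p])) := by
        push_cast; ring
      rw [hcast]
      refine le_trans (Padic.nonarchimedean _ _) (max_le ?_ hspec')
      rwa [← norm_neg, neg_sub]
    have hdvd : ((p:ℤ) ^ g) ∣ ((J:ℤ) - (J':ℤ)) :=
      (Padic.norm_int_le_pow_iff_dvd _ g).mp hJJ'
    have hJ'ltn : J' < p ^ g := by
      have h4 : ((p:ℚ) ^ γA) = ((p ^ g : ℕ) : ℚ) := by rw [← hg, zpow_natCast, Nat.cast_pow]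
      rw [h4] at hJ'lt
      exact_mod_cast hJ'lt
    have habs : |(J:ℤ) - (J':ℤ)| < (p:ℤ) ^ g := by
      have h1 : (J:ℤ) < (p:ℤ) ^ g := by exact_mod_cast hJlt
      have h2 : (J':ℤ) < (p:ℤ) ^ g := by exact_mod_cast hJ'ltn
      rw [abs_lt]
      omega
    have hJJ : J' = J := by
      have := Int.eq_zero_of_abs_lt_dvd hdvd habs
      omega
    subst hJJ
    -- step 3 : n' = n
    have hn'2 : ‖b * a₁⁻¹ - n'‖ ≤ (p:ℝ) ^ (-(1 - γ₀)) := by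
      have heq : (b - (p : ℚ_[p]) ^ γ * (J : ℚ_[p]) * n') * ((p : ℚ_[p]) ^ γ * (J : ℚ_[p]))⁻¹
          = b * a₁⁻¹ - n' := by
        rw [← ha₁def, sub_mul, mul_comm a₁ n', mul_assoc, mul_inv_cancel₀ ha₁0, mul_one]
      rw [heq] at h2'
      exact h2'.trans_eq hexp.symm
    have hnn : n' = n := by
      refine rep_unique p (1 - γ₀) hn'R hnR ?_
      have h5 : n' - n = -(b * a₁⁻¹ - n') + (b * a₁⁻¹ - n) := by ring
      rw [h5]
      refine le_trans (Padic.nonarchimedean _ _) (max_le ?_ hn)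
      rwa [norm_neg]
    rw [hnn]
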